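/- arXiv:2502.05081 — 4 statements merged into one kernel-verified Lean document; each statement's English description precedes it below -/
import Mathlib

section
/- Fix h > 0 and p_k, p_h ∈ ℝ, and set Δ := p_k − ρ·p_h. If Δ ≤ 0, then the map c ↦ g(c; h, p_k, p_h) is strictly increasing on (0,∞). If Δ > 0, then with c* := (h^{γ(σ−1)}/Δ)^{1/σ}, the map c ↦ g(c; h, p_k, p_h) is increasing on (0, c*] and decreasing on [c*, ∞), and its maximum value is g(c*; h, p_k, p_h) = −(1 + 1/(σ−1))·(h^γ·Δ)^{1−1/σ}. -/
open MeasureTheory ProbabilityTheory Real Set Matrix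
open scoped ENNReal NNReal

noncomputable section

namespace HabitModel

/-- The function `g(c; h, p_k, p_h) = -c·(p_k - ρ·p_h) - (1/(σ-1))·(h^γ/c)^(σ-1)`. -/
def gFun (ρ σ γ : ℝ) (c h pk ph : ℝ) : ℝ :=
  -c * (pk - ρ * ph) - (σ - 1)⁻¹ * (h ^ γ / c) ^ (σ - 1)

/-- The maximized Hamiltonian term `G(k,h,p_k,p_h)`. -/
def GFun (ρ σ γ R : ℝ) (k h pk ph : ℝ) : ℝ :=
  if pk - ρ * ph ≤ h ^ (γ * (σ - 1)) * (R * k) ^ (-σ) then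
    -(R * k) * (pk - ρ * ph) - (σ - 1)⁻¹ * (h ^ γ / (R * k)) ^ (σ - 1)
  else
    -(1 + (σ - 1)⁻¹) * (h ^ γ * (pk - ρ * ph)) ^ (1 - 1 / σ)

/-- The maximum value Hamiltonian `H_max(k,h,p,Q)` (only the diagonal entries of `Q` enter). -/
def Hmax (B β₁ β₂ ρ σ γ R : ℝ) (k h : ℝ) (p : ℝ × ℝ)
    (Q : Matrix (Fin 2) (Fin 2) ℝ) : ℝ :=
  B * k * p.1 - ρ * h * p.2 + (1 / 2) * β₁ ^ 2 * k ^ 2 * Q 0 0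
    + (1 / 2) * β₂ ^ 2 * h ^ 2 * Q 1 1 + GFun ρ σ γ R k h p.1 p.2

/-- `F̃(Q, p, v, (k,h)) = -θ·v + H_max(k,h,p,Q)`. -/
def Ftilde (B β₁ β₂ ρ θ σ γ R : ℝ) (Q : Matrix (Fin 2) (Fin 2) ℝ)
    (p : ℝ × ℝ) (v : ℝ) (z : ℝ × ℝ) : ℝ :=
  -θ * v + Hmax B β₁ β₂ ρ σ γ R z.1 z.2 p Q

/-- Auxiliary model function `f c = -c Δ - (σ-1)⁻¹ A c^{-(σ-1)}`. -/
private def fAux (Δ A σ : ℝ) (c : ℝ) : ℝ := -c * Δ - (σ - 1)⁻¹ * A * c ^ (-(σ - 1))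

private lemma gFun_eq_fAux (ρ σ γ : ℝ) (h pk ph : ℝ) (hh : 0 < h)
    {c : ℝ} (hc : 0 < c) :
    gFun ρ σ γ c h pk ph = fAux (pk - ρ * ph) (h ^ (γ * (σ - 1))) σ c := by
  have hhγ : (0:ℝ) ≤ h ^ γ := (Real.rpow_pos_of_pos hh γ).le
  unfold gFun fAux
  rw [Real.div_rpow hhγ hc.le, ← Real.rpow_mul hh.le, Real.rpow_neg hc.le]
  ring

private lemma fAux_hasDerivAt (Δ A σ : ℝ) (hσ : 1 < σ) {c : ℝ} (hc : 0 < c) :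
    HasDerivAt (fAux Δ A σ) (-Δ + A * c ^ (-σ)) c := by
  have h1 : HasDerivAt (fun c : ℝ => -c * Δ) (-Δ) c := by
    simpa using ((hasDerivAt_id c).neg.mul_const Δ)
  have h2 : HasDerivAt (fun c : ℝ => c ^ (-(σ - 1))) (-(σ - 1) * c ^ (-(σ - 1) - 1)) c :=
    Real.hasDerivAt_rpow_const (Or.inl hc.ne')
  have h3 := h1.sub (h2.const_mul ((σ - 1)⁻¹ * A))
  have he : -(σ - 1) - 1 = -σ := by ring
  have hσ1 : σ - 1 ≠ 0 := by nlinarith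
  refine h3.congr_deriv ?_
  rw [he]
  field_simp
  ring

private lemma fAux_contOn (Δ A σ : ℝ) (hσ : 1 < σ) {s : Set ℝ} (hs : s ⊆ Set.Ioi 0) :
    ContinuousOn (fAux Δ A σ) s := fun x hx =>
  ((fAux_hasDerivAt Δ A σ hσ (hs hx)).continuousAt).continuousWithinAt

private lemma fAux_diffOn (Δ A σ : ℝ) (hσ : 1 < σ) {s : Set ℝ} (hs : s ⊆ Set.Ioi 0) :
    DifferentiableOn ℝ (fAux Δ A σ) s := fun x hx =>
  ((fAux_hasDerivAt Δ A σ hσ (hs hx)).differentiableAt).differentiableWithinAt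

private lemma fAux_deriv (Δ A σ : ℝ) (hσ : 1 < σ) {c : ℝ} (hc : 0 < c) :
    deriv (fAux Δ A σ) c = -Δ + A * c ^ (-σ) :=
  (fAux_hasDerivAt Δ A σ hσ hc).deriv

/-- Monotonicity of `c ↦ g(c; h, p_k, p_h)`: strictly increasing on `(0,∞)` if
`Δ = p_k - ρ·p_h ≤ 0`; if `Δ > 0`, increasing on `(0,c*]` and decreasing on `[c*,∞)` with
`c* = (h^{γ(σ-1)}/Δ)^{1/σ}`, where the maximum value is
`g(c*) = -(1 + 1/(σ-1))·(h^γ·Δ)^{1-1/σ}`. -/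
theorem gFun_monotonicity (ρ σ γ : ℝ) (hρ₀ : 0 < ρ) (hρ₁ : ρ < 1) (hσ : 1 < σ)
    (hγ₀ : 0 ≤ γ) (hγ₁ : γ < 1) (h pk ph : ℝ) (hh : 0 < h) :
    (pk - ρ * ph ≤ 0 → StrictMonoOn (fun c => gFun ρ σ γ c h pk ph) (Set.Ioi 0)) ∧
    (0 < pk - ρ * ph →
      MonotoneOn (fun c => gFun ρ σ γ c h pk ph)
        (Set.Ioc 0 ((h ^ (γ * (σ - 1)) / (pk - ρ * ph)) ^ (1 / σ))) ∧
      AntitoneOn (fun c => gFun ρ σ γ c h pk ph)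
        (Set.Ici ((h ^ (γ * (σ - 1)) / (pk - ρ * ph)) ^ (1 / σ))) ∧
      (∀ c ∈ Set.Ioi (0:ℝ), gFun ρ σ γ c h pk ph ≤
        gFun ρ σ γ ((h ^ (γ * (σ - 1)) / (pk - ρ * ph)) ^ (1 / σ)) h pk ph) ∧
      gFun ρ σ γ ((h ^ (γ * (σ - 1)) / (pk - ρ * ph)) ^ (1 / σ)) h pk ph =
        -(1 + (σ - 1)⁻¹) * (h ^ γ * (pk - ρ * ph)) ^ (1 - 1 / σ)) := by
  set Δ := pk - ρ * ph with hΔdef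
  set A := h ^ (γ * (σ - 1)) with hAdef
  have hA : 0 < A := Real.rpow_pos_of_pos hh _
  have hσ0 : (0:ℝ) < σ := by linarith
  have hgf : ∀ c : ℝ, 0 < c → gFun ρ σ γ c h pk ph = fAux Δ A σ c := fun c hc =>
    gFun_eq_fAux ρ σ γ h pk ph hh hc
  constructor
  · -- Δ ≤ 0
    intro hΔ
    have hmono : StrictMonoOn (fAux Δ A σ) (Set.Ioi 0) := by
      apply strictMonoOn_of_deriv_pos (convex_Ioi 0)
        (fAux_contOn Δ A σ hσ subset_rfl)
      intro x hx
      rw [interior_Ioi] at hx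
      rw [fAux_deriv Δ A σ hσ hx]
      have : 0 < A * x ^ (-σ) := mul_pos hA (Real.rpow_pos_of_pos hx _)
      linarith
    intro a ha b hb hab
    simp only [hgf a ha, hgf b hb]
    exact hmono ha hb hab
  · -- Δ > 0
    intro hΔ
    set cs := (A / Δ) ^ (1 / σ) with hcsdef
    have hADpos : 0 < A / Δ := div_pos hA hΔ
    have hcs : 0 < cs := Real.rpow_pos_of_pos hADpos _
    have hcspow : cs ^ σ = A / Δ := by
      rw [hcsdef, ← Real.rpow_mul hADpos.le, one_div, inv_mul_cancel₀ hσ0.ne',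
        Real.rpow_one]
    have hderiv_sign : ∀ c : ℝ, 0 < c → ((0:ℝ) ≤ -Δ + A * c ^ (-σ) ↔ Δ * c ^ σ ≤ A) := by
      intro c hc
      have hcσ : (0:ℝ) < c ^ σ := Real.rpow_pos_of_pos hc _
      have h2 : c ^ σ * (c ^ σ)⁻¹ = 1 := mul_inv_cancel₀ hcσ.ne'
      rw [Real.rpow_neg hc.le]
      constructor
      · intro h1
        nlinarith [mul_nonneg h1 hcσ.le]
      · intro h1
        have h3 : 0 ≤ (A - Δ * c ^ σ) * (c ^ σ)⁻¹ :=
          mul_nonneg (by linarith) (inv_nonneg.2 hcσ.le)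
        nlinarith
    have hIocsub : Set.Ioc (0:ℝ) cs ⊆ Set.Ioi 0 := fun x hx => hx.1
    have hIcisub : Set.Ici cs ⊆ Set.Ioi 0 := fun x hx => lt_of_lt_of_le hcs hx
    have hmono : MonotoneOn (fAux Δ A σ) (Set.Ioc 0 cs) := by
      apply monotoneOn_of_deriv_nonneg (convex_Ioc 0 cs)
        (fAux_contOn Δ A σ hσ hIocsub)
        (fAux_diffOn Δ A σ hσ (by rw [interior_Ioc]; exact fun x hx => hx.1))
      intro x hx
      rw [interior_Ioc] at hx
      rw [fAux_deriv Δ A σ hσ hx.1, hderiv_sign x hx.1]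
      have h1 : x ^ σ < cs ^ σ := Real.rpow_lt_rpow hx.1.le hx.2 hσ0
      rw [hcspow] at h1
      have h2 : Δ * (A / Δ) = A := by field_simp
      nlinarith
    have hanti : AntitoneOn (fAux Δ A σ) (Set.Ici cs) := by
      apply antitoneOn_of_deriv_nonpos (convex_Ici cs)
        (fAux_contOn Δ A σ hσ hIcisub)
        (fAux_diffOn Δ A σ hσ (by rw [interior_Ici]; exact fun x hx => lt_trans hcs hx))
      intro x hx
      rw [interior_Ici] at hx
      have hx0 : 0 < x := lt_trans hcs hx
      have hxσ : (0:ℝ) < x ^ σ := Real.rpow_pos_of_pos hx0 _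
      rw [fAux_deriv Δ A σ hσ hx0, Real.rpow_neg hx0.le]
      have h1 : cs ^ σ < x ^ σ := Real.rpow_lt_rpow hcs.le hx hσ0
      rw [hcspow] at h1
      have h2 : A < Δ * x ^ σ := by
        rw [div_lt_iff₀ hΔ] at h1; linarith [mul_comm (x ^ σ) Δ, h1]
      have h3 : A * (x ^ σ)⁻¹ < Δ := by
        rw [← div_eq_mul_inv, div_lt_iff₀ hxσ]
        nlinarith
      linarith
    have hmonoG : MonotoneOn (fun c => gFun ρ σ γ c h pk ph) (Set.Ioc 0 cs) := by
      intro a ha b hb hab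
      simp only [hgf a (hIocsub ha), hgf b (hIocsub hb)]
      exact hmono ha hb hab
    have hantiG : AntitoneOn (fun c => gFun ρ σ γ c h pk ph) (Set.Ici cs) := by
      intro a ha b hb hab
      simp only [hgf a (hIcisub ha), hgf b (hIcisub hb)]
      exact hanti ha hb hab
    refine ⟨hmonoG, hantiG, ?_, ?_⟩
    · intro c hc
      rcases le_total c cs with hle | hle
      · exact hmonoG ⟨hc, hle⟩ ⟨hcs, le_rfl⟩ hle
      · exact hantiG (Set.mem_Ici.2 le_rfl) (Set.mem_Ici.2 hle) hle
    · have hkey : (h ^ γ / cs) ^ (σ - 1) = Δ * cs := by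
        have hcsm : cs ^ (σ - 1) = (A / Δ) / cs := by
          rw [show σ - 1 = σ + (-1) by ring, Real.rpow_add hcs, Real.rpow_neg_one,
            hcspow]
          ring
        rw [Real.div_rpow (Real.rpow_pos_of_pos hh γ).le hcs.le,
          ← Real.rpow_mul hh.le, ← hAdef, hcsm]
        field_simp
      have hDcs : Δ * cs = (h ^ γ * Δ) ^ (1 - 1 / σ) := by
        rw [Real.mul_rpow (Real.rpow_pos_of_pos hh γ).le hΔ.le,
          ← Real.rpow_mul hh.le, hcsdef, Real.div_rpow hA.le hΔ.le, hAdef,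
          ← Real.rpow_mul hh.le,
          show γ * (σ - 1) * (1 / σ) = γ * (1 - 1 / σ) by field_simp,
          Real.rpow_sub hΔ, Real.rpow_one]
        ring
      show -cs * Δ - (σ - 1)⁻¹ * (h ^ γ / cs) ^ (σ - 1) =
        -(1 + (σ - 1)⁻¹) * (h ^ γ * Δ) ^ (1 - 1 / σ)
      rw [hkey, ← hDcs]
      ring
end HabitModel
end
end

section
/- For every (k,h) ∈ (0,∞)² and every p_k, p_h ∈ ℝ, the supremum of g(c; h, p_k, p_h) over c ∈ (0, R·k] equals G(k,h,p_k,p_h), and it is attained: at c = R·k when p_k − ρ·p_h ≤ h^{γ(σ−1)}·(R·k)^{−σ}, and at c = (h^{γ(σ−1)}/(p_k − ρ·p_h))^{1/σ} ∈ (0, R·k) when p_k − ρ·p_h > h^{γ(σ−1)}·(R·k)^{−σ}. -/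
open MeasureTheory ProbabilityTheory Real Set Matrix
open scoped ENNReal NNReal

noncomputable section

namespace HabitModel

lemma key_ineq (σ t : ℝ) (hσ : 1 < σ) (ht : 0 < t) :
    σ / (σ - 1) ≤ t + (σ - 1)⁻¹ * t ^ (1 - σ) := by
  have hs : (0:ℝ) < σ := by linarith
  have hs1 : (0:ℝ) < σ - 1 := by linarith
  have hp2 : (0:ℝ) < t ^ (1 - σ) := Real.rpow_pos_of_pos ht _
  have hsum : (σ - 1)/σ + 1/σ = 1 := by field_simp; ring
  have hgm := Real.geom_mean_le_arith_mean2_weighted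
    (by positivity : (0:ℝ) ≤ (σ-1)/σ) (by positivity : (0:ℝ) ≤ 1/σ) ht.le hp2.le hsum
  have h1 : t ^ ((σ-1)/σ) * (t ^ (1-σ)) ^ (1/σ) = 1 := by
    rw [← Real.rpow_mul ht.le (1-σ) (1/σ), ← Real.rpow_add ht,
      show (σ-1)/σ + (1-σ)*(1/σ) = 0 by field_simp; ring, Real.rpow_zero]
  rw [h1] at hgm
  rw [div_le_iff₀ hs1]
  have h2 := mul_le_mul_of_nonneg_left hgm hs.le
  have h3 : σ * ((σ-1)/σ * t + 1/σ * t ^ (1-σ)) = (σ-1)*t + t^(1-σ) := by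
    field_simp
  rw [h3, mul_one] at h2
  have h4 : (σ-1)⁻¹ * t^(1-σ) * (σ-1) = t^(1-σ) := by
    field_simp
  nlinarith [h2, h4]

lemma g_le_aux (σ A a c c₀ : ℝ) (hσ : 1 < σ) (hA : 0 < A) (hc : 0 < c) (hc₀ : 0 < c₀)
    (hsign : A * c₀ ^ (-σ) * (c - c₀) ≤ a * (c - c₀)) :
    -c * a - (σ - 1)⁻¹ * (A * c ^ (1 - σ)) ≤ -c₀ * a - (σ - 1)⁻¹ * (A * c₀ ^ (1 - σ)) := by
  have hs1 : (0:ℝ) < σ - 1 := by linarith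
  set P : ℝ := c ^ (1-σ) with hP
  set P₀ : ℝ := c₀ ^ (1-σ) with hP₀
  set Q₀ : ℝ := c₀ ^ (-σ) with hQ₀
  have hPpos : 0 < P := Real.rpow_pos_of_pos hc _
  have hP₀pos : 0 < P₀ := Real.rpow_pos_of_pos hc₀ _
  have hQ₀pos : 0 < Q₀ := Real.rpow_pos_of_pos hc₀ _
  have hPQ : P₀ = Q₀ * c₀ := by
    rw [hP₀, hQ₀, show (1-σ) = -σ + 1 by ring, Real.rpow_add hc₀, Real.rpow_one]
  have hkey := key_ineq σ (c/c₀) hσ (div_pos hc hc₀)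
  have hdiv : (c/c₀) ^ (1-σ) = P / P₀ := by
    rw [hP, hP₀, Real.div_rpow hc.le hc₀.le]
  rw [hdiv] at hkey
  have hmul := mul_le_mul_of_nonneg_left hkey (by positivity : (0:ℝ) ≤ A * P₀)
  have e1 : A * P₀ * (c/c₀ + (σ-1)⁻¹ * (P/P₀)) = A * Q₀ * c + (σ-1)⁻¹ * (A * P) := by
    rw [hPQ]; field_simp
  have e2 : A * P₀ * (σ/(σ-1)) = A * Q₀ * c₀ + (σ-1)⁻¹ * (A * P₀) := by
    rw [hPQ]; field_simp; ring
  rw [e1, e2] at hmul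
  nlinarith [hmul, hsign]

lemma gFun_eq (ρ σ γ c h pk ph : ℝ) (hh : 0 < h) (hc : 0 < c) :
    gFun ρ σ γ c h pk ph
      = -c * (pk - ρ * ph) - (σ - 1)⁻¹ * (h ^ (γ * (σ - 1)) * c ^ (1 - σ)) := by
  unfold gFun
  have h1 : (h ^ γ / c) ^ (σ - 1) = h ^ (γ * (σ-1)) * c ^ (1-σ) := by
    rw [Real.div_rpow (by positivity) hc.le, Real.rpow_mul hh.le,
      show (1-σ) = -(σ-1) by ring, Real.rpow_neg hc.le, div_eq_mul_inv]
  rw [h1]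

/-- The supremum of `g(·; h, p_k, p_h)` over `(0, R·k]` equals `G(k,h,p_k,p_h)` and is
attained: at `c = R·k` in the first regime, and at `c = (h^{γ(σ-1)}/(p_k-ρ·p_h))^{1/σ} ∈
(0, R·k)` in the second regime. -/
theorem gFun_sup_eq_GFun (ρ σ γ R : ℝ) (hρ₀ : 0 < ρ) (hρ₁ : ρ < 1) (hσ : 1 < σ)
    (hγ₀ : 0 ≤ γ) (hγ₁ : γ < 1) (hR : 0 < R) (k h pk ph : ℝ) (hk : 0 < k) (hh : 0 < h) :
    IsGreatest ((fun c => gFun ρ σ γ c h pk ph) '' Set.Ioc 0 (R * k))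
      (GFun ρ σ γ R k h pk ph) ∧
    (pk - ρ * ph ≤ h ^ (γ * (σ - 1)) * (R * k) ^ (-σ) →
      gFun ρ σ γ (R * k) h pk ph = GFun ρ σ γ R k h pk ph) ∧
    (h ^ (γ * (σ - 1)) * (R * k) ^ (-σ) < pk - ρ * ph →
      (h ^ (γ * (σ - 1)) / (pk - ρ * ph)) ^ (1 / σ) ∈ Set.Ioo 0 (R * k) ∧
      gFun ρ σ γ ((h ^ (γ * (σ - 1)) / (pk - ρ * ph)) ^ (1 / σ)) h pk ph =
        GFun ρ σ γ R k h pk ph) := by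

  have hs : (0:ℝ) < σ := by linarith
  have hs1 : (0:ℝ) < σ - 1 := by linarith
  set a : ℝ := pk - ρ * ph with ha
  set A : ℝ := h ^ (γ * (σ - 1)) with hAdef
  have hA : 0 < A := Real.rpow_pos_of_pos hh _
  have hRk : 0 < R * k := mul_pos hR hk
  by_cases hle : a ≤ A * (R * k) ^ (-σ)
  · -- boundary regime
    have hGeq : GFun ρ σ γ R k h pk ph
        = -(R * k) * a - (σ - 1)⁻¹ * (h ^ γ / (R * k)) ^ (σ - 1) := by
      unfold GFun; rw [if_pos hle]
    have hgG : gFun ρ σ γ (R * k) h pk ph = GFun ρ σ γ R k h pk ph := by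
      rw [hGeq]; unfold gFun; ring
    refine ⟨⟨⟨R * k, ⟨hRk, le_refl _⟩, hgG⟩, ?_⟩, fun _ => hgG, fun hgt => absurd hgt (not_lt.2 hle)⟩
    rintro y ⟨c, ⟨hc0, hcle⟩, rfl⟩
    rw [← hgG]
    simp only
    rw [gFun_eq ρ σ γ c h pk ph hh hc0, gFun_eq ρ σ γ (R*k) h pk ph hh hRk]
    refine g_le_aux σ A a c (R*k) hσ hA hc0 hRk ?_
    have hcm : c - R * k ≤ 0 := by linarith
    nlinarith [mul_le_mul_of_nonpos_right hle hcm]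
  · -- interior regime
    push_neg at hle
    have hQpos : 0 < (R * k) ^ (-σ) := Real.rpow_pos_of_pos hRk _
    have hapos : 0 < a := lt_trans (by positivity) hle
    set cs : ℝ := (A / a) ^ (1 / σ) with hcs
    have hcspos : 0 < cs := Real.rpow_pos_of_pos (by positivity) _
    have hRkσ : (R * k) ^ (-σ) = ((R * k) ^ σ)⁻¹ := Real.rpow_neg hRk.le σ
    have hSpos : 0 < (R * k) ^ σ := Real.rpow_pos_of_pos hRk _
    have hAlt : A / a < (R * k) ^ σ := by
      rw [div_lt_iff₀ hapos]
      rw [hRkσ] at hle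
      have h1 := mul_lt_mul_of_pos_right hle hSpos
      have h2 : A * ((R*k)^σ)⁻¹ * (R*k)^σ = A := by field_simp
      rw [h2] at h1
      linarith [h1, mul_comm a ((R*k)^σ)]
    have hcslt : cs < R * k := by
      have := Real.rpow_lt_rpow (by positivity : (0:ℝ) ≤ A / a) hAlt (by positivity : (0:ℝ) < 1/σ)
      rwa [← Real.rpow_mul hRk.le, mul_one_div, div_self hs.ne', Real.rpow_one] at this
    have hcsσ : cs ^ σ = A / a := by
      rw [hcs, ← Real.rpow_mul (by positivity : (0:ℝ) ≤ A / a), one_div,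
        inv_mul_cancel₀ hs.ne', Real.rpow_one]
    have hAcrit : A * cs ^ (-σ) = a := by
      rw [Real.rpow_neg hcspos.le, hcsσ]
      field_simp
    -- value at cs
    have hAc1 : A * cs ^ (1 - σ) = a * cs := by
      rw [show (1-σ) = -σ + 1 by ring, Real.rpow_add hcspos, Real.rpow_one, ← mul_assoc, hAcrit]
    have hval : a * cs = (h ^ γ * a) ^ (1 - 1/σ) := by
      have hhg : (0:ℝ) < h ^ γ := Real.rpow_pos_of_pos hh _
      rw [Real.mul_rpow hhg.le hapos.le]
      have e1 : (h ^ γ) ^ (1 - 1/σ) = A ^ (1/σ) := by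
        rw [hAdef, ← Real.rpow_mul hh.le, ← Real.rpow_mul hh.le]
        congr 1
        field_simp
      have e2 : a ^ (1 - 1/σ) = a * (a ^ (1/σ))⁻¹ := by
        rw [show (1:ℝ) - 1/σ = 1 + -(1/σ) by ring, Real.rpow_add hapos, Real.rpow_one,
          Real.rpow_neg hapos.le]
      rw [e1, e2, hcs, Real.div_rpow hA.le hapos.le]
      field_simp
    have hGeq : GFun ρ σ γ R k h pk ph = -(1 + (σ-1)⁻¹) * (h ^ γ * a) ^ (1 - 1/σ) := by
      unfold GFun; rw [if_neg (not_le.2 hle)]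
    have hgcs : gFun ρ σ γ cs h pk ph = GFun ρ σ γ R k h pk ph := by
      rw [gFun_eq ρ σ γ cs h pk ph hh hcspos, hGeq, hAc1, ← hval]
      ring
    have hub : ∀ y ∈ (fun c => gFun ρ σ γ c h pk ph) '' Set.Ioc 0 (R * k),
        y ≤ GFun ρ σ γ R k h pk ph := by
      rintro y ⟨c, ⟨hc0, _⟩, rfl⟩
      rw [← hgcs]
      simp only
      rw [gFun_eq ρ σ γ c h pk ph hh hc0, gFun_eq ρ σ γ cs h pk ph hh hcspos]
      refine g_le_aux σ A a c cs hσ hA hc0 hcspos ?_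
      rw [hAcrit]
    refine ⟨⟨⟨cs, ⟨hcspos, hcslt.le⟩, hgcs⟩, hub⟩,
      fun hle' => absurd hle' (not_le.2 hle), fun _ => ⟨⟨hcspos, hcslt⟩, hgcs⟩⟩


end HabitModel
end
end

section
/- Let D ⊂ ℝ² be open and bounded with closure contained in (0,∞)². Then there exists a constant C̄ > 0 such that for every real symmetric 2×2 matrix Q, every (k,h) in the closure of D, every p = (p_k,p_h), p̄ = (p̄_k,p̄_h) ∈ ℝ² and every v, v̄ ∈ ℝ: |F̃(Q, p, v, (k,h)) − F̃(Q, p̄, v̄, (k,h))| ≤ C̄·(|p_k − p̄_k| + |p_h − p̄_h| + |v − v̄|). -/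
open MeasureTheory ProbabilityTheory Real Set Matrix
open scoped ENNReal NNReal

noncomputable section

namespace HabitModel

lemma pow_lip {M a q L T : ℝ} (hM : 0 < M) (ha : 0 < a) (hq : 0 < q) (hq1 : q < 1)
    (hT : 0 < T) (hL : M * q * a ^ q * T ^ (q - 1) ≤ L) :
    ∀ u ∈ Set.Ici T, ∀ v ∈ Set.Ici T,
      |(-M * (a * u) ^ q) - (-M * (a * v) ^ q)| ≤ L * |u - v| := by
  intro u hu v hv
  set f : ℝ → ℝ := fun x => -(M * a ^ q) * x ^ q with hf
  set f' : ℝ → ℝ := fun x => -(M * a ^ q) * (q * x ^ (q - 1)) with hf'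
  have hderiv : ∀ x ∈ Set.Ici T, HasDerivWithinAt f (f' x) (Set.Ici T) x := by
    intro x hx
    exact ((Real.hasDerivAt_rpow_const (p := q)
      (Or.inl (ne_of_gt (lt_of_lt_of_le hT hx)))).const_mul _).hasDerivWithinAt
  have hbound : ∀ x ∈ Set.Ici T, ‖f' x‖ ≤ L := by
    intro x hx
    have hx0 : (0:ℝ) < x := lt_of_lt_of_le hT hx
    have h1 : x ^ (q - 1) ≤ T ^ (q - 1) :=
      Real.rpow_le_rpow_of_nonpos hT hx (by linarith)
    have h2 : ‖f' x‖ = M * q * a ^ q * x ^ (q - 1) := by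
      rw [hf', Real.norm_eq_abs, abs_mul, abs_neg, abs_mul,
        abs_of_pos hM, abs_of_pos (Real.rpow_pos_of_pos ha q), abs_mul,
        abs_of_pos hq, abs_of_pos (Real.rpow_pos_of_pos hx0 _)]
      ring
    rw [h2]
    calc M * q * a ^ q * x ^ (q - 1) ≤ M * q * a ^ q * T ^ (q - 1) := by
          have : (0:ℝ) < M * q * a ^ q := by positivity
          nlinarith
      _ ≤ L := hL
  have key := (convex_Ici T).norm_image_sub_le_of_norm_hasDerivWithin_le hderiv hbound hv hu
  have eu : f u = -M * (a * u) ^ q := by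
    rw [hf]; rw [Real.mul_rpow ha.le (le_of_lt (lt_of_lt_of_le hT hu))]; ring
  have ev : f v = -M * (a * v) ^ q := by
    rw [hf]; rw [Real.mul_rpow ha.le (le_of_lt (lt_of_lt_of_le hT hv))]; ring
  rw [Real.norm_eq_abs, Real.norm_eq_abs, eu, ev] at key
  exact key

lemma phi_lip {M a q L T A : ℝ} (hM : 0 < M) (ha : 0 < a) (hq : 0 < q) (hq1 : q < 1)
    (hT : 0 < T) (hL : 0 < L) (hD : M * q * a ^ q * T ^ (q - 1) ≤ L)
    (hmatch : -L * T - A = -M * (a * T) ^ q) (x y : ℝ) :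
    |(if x ≤ T then -L * x - A else -M * (a * x) ^ q) -
      (if y ≤ T then -L * y - A else -M * (a * y) ^ q)| ≤ L * |x - y| := by
  have main : ∀ u v : ℝ, v ≤ u →
      |(if u ≤ T then -L * u - A else -M * (a * u) ^ q) -
        (if v ≤ T then -L * v - A else -M * (a * v) ^ q)| ≤ L * |u - v| := by
    intro u v huv
    rcases le_or_gt u T with hu | hu
    · have hv : v ≤ T := le_trans huv hu
      rw [if_pos hu, if_pos hv]
      have : -L * u - A - (-L * v - A) = -(L * (u - v)) := by ring
      rw [this, abs_neg, abs_mul, abs_of_pos hL]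
    · rw [if_neg (not_le.mpr hu)]
      rcases le_or_gt v T with hv | hv
      · rw [if_pos hv]
        have h1 : |(-M * (a * u) ^ q) - (-M * (a * T) ^ q)| ≤ L * |u - T| :=
          pow_lip hM ha hq hq1 hT hD u (le_of_lt hu) T (le_refl T)
        have h2 : |(-L * T - A) - (-L * v - A)| = L * (T - v) := by
          have : -L * T - A - (-L * v - A) = -(L * (T - v)) := by ring
          rw [this, abs_neg, abs_mul, abs_of_pos hL, abs_of_nonneg (by linarith)]
        calc |(-M * (a * u) ^ q) - (-L * v - A)|
            ≤ |(-M * (a * u) ^ q) - (-M * (a * T) ^ q)| +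
              |(-M * (a * T) ^ q) - (-L * v - A)| := abs_sub_le _ _ _
          _ = |(-M * (a * u) ^ q) - (-M * (a * T) ^ q)| +
              |(-L * T - A) - (-L * v - A)| := by rw [hmatch]
          _ ≤ L * |u - T| + L * (T - v) := by linarith [h2.le]
          _ ≤ L * |u - v| := by
              rw [abs_of_nonneg (by linarith : (0:ℝ) ≤ u - T),
                abs_of_nonneg (by linarith : (0:ℝ) ≤ u - v)]
              nlinarith
      · rw [if_neg (not_le.mpr hv)]
        exact pow_lip hM ha hq hq1 hT hD u (le_of_lt hu) v (le_of_lt hv)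
  rcases le_total y x with h | h
  · exact main x y h
  · rw [abs_sub_comm]; exact (abs_sub_comm x y ▸ main y x h)

lemma GFun_lip {ρ σ γ R k h : ℝ} (hσ : 1 < σ) (hR : 0 < R) (hk : 0 < k) (hh : 0 < h)
    (pk ph pk' ph' : ℝ) :
    |GFun ρ σ γ R k h pk ph - GFun ρ σ γ R k h pk' ph'| ≤
      (R * k) * |(pk - ρ * ph) - (pk' - ρ * ph')| := by
  have hσ0 : (0:ℝ) < σ := by linarith
  have hσ1 : (0:ℝ) < σ - 1 := by linarith
  have hRk : 0 < R * k := by positivity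
  have hM : (0:ℝ) < 1 + (σ - 1)⁻¹ := by positivity
  have ha : 0 < h ^ γ := Real.rpow_pos_of_pos hh γ
  have hq : (0:ℝ) < 1 - 1 / σ := by
    have : 1 / σ < 1 := by rw [div_lt_one hσ0]; linarith
    linarith
  have hq1 : (1:ℝ) - 1 / σ < 1 := by
    have : (0:ℝ) < 1 / σ := by positivity
    linarith
  have hT : 0 < h ^ (γ * (σ - 1)) * (R * k) ^ (-σ) := by positivity
  have hMq : (1 + (σ - 1)⁻¹) * (1 - 1 / σ) = 1 := by field_simp; ring
  -- the common value X
  have hX1 : (R * k) * (h ^ (γ * (σ - 1)) * (R * k) ^ (-σ))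
      = h ^ (γ * (σ - 1)) * (R * k) ^ (1 - σ) := by
    rw [show (R * k) * (h ^ (γ * (σ - 1)) * (R * k) ^ (-σ))
        = h ^ (γ * (σ - 1)) * ((R * k) ^ (1:ℝ) * (R * k) ^ (-σ)) by
      rw [Real.rpow_one]; ring]
    rw [← Real.rpow_add hRk, show (1:ℝ) + -σ = 1 - σ by ring]
  have hX2 : (h ^ γ / (R * k)) ^ (σ - 1)
      = h ^ (γ * (σ - 1)) * (R * k) ^ (1 - σ) := by
    rw [Real.div_rpow ha.le hRk.le, ← Real.rpow_mul hh.le,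
      div_eq_mul_inv, ← Real.rpow_neg hRk.le]
    ring_nf
  have he1 : (γ + γ * (σ - 1)) * (1 - 1 / σ) = γ * (σ - 1) := by field_simp; ring
  have he2 : -σ * (1 - 1 / σ) = 1 - σ := by field_simp; ring
  have he3 : γ * (1 - 1 / σ) + γ * (σ - 1) * (1 - 1 / σ - 1) = 0 := by field_simp; ring
  have he4 : -σ * (1 - 1 / σ - 1) = 1 := by field_simp; ring
  have hX3 : (h ^ γ * (h ^ (γ * (σ - 1)) * (R * k) ^ (-σ))) ^ (1 - 1 / σ)
      = h ^ (γ * (σ - 1)) * (R * k) ^ (1 - σ) := by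
    rw [show h ^ γ * (h ^ (γ * (σ - 1)) * (R * k) ^ (-σ))
        = (h ^ γ * h ^ (γ * (σ - 1))) * (R * k) ^ (-σ) by ring,
      ← Real.rpow_add hh,
      Real.mul_rpow (by positivity) (by positivity),
      ← Real.rpow_mul hh.le, ← Real.rpow_mul hRk.le, he1, he2]
  have hD : (1 + (σ - 1)⁻¹) * (1 - 1 / σ) * (h ^ γ) ^ (1 - 1 / σ)
      * (h ^ (γ * (σ - 1)) * (R * k) ^ (-σ)) ^ (1 - 1 / σ - 1) ≤ R * k := by
    have hb1 : (h ^ γ) ^ (1 - 1 / σ) = h ^ (γ * (1 - 1 / σ)) :=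
      (Real.rpow_mul hh.le γ _).symm
    have hb2 : (h ^ (γ * (σ - 1)) * (R * k) ^ (-σ)) ^ (1 - 1 / σ - 1)
        = h ^ (γ * (σ - 1) * (1 - 1 / σ - 1)) * (R * k) ^ (-σ * (1 - 1 / σ - 1)) := by
      rw [Real.mul_rpow (by positivity) (by positivity),
        ← Real.rpow_mul hh.le, ← Real.rpow_mul hRk.le]
    rw [hMq, one_mul, hb1, hb2, he4, Real.rpow_one]
    refine le_of_eq ?_
    calc h ^ (γ * (1 - 1 / σ)) * (h ^ (γ * (σ - 1) * (1 - 1 / σ - 1)) * (R * k))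
        = (h ^ (γ * (1 - 1 / σ)) * h ^ (γ * (σ - 1) * (1 - 1 / σ - 1))) * (R * k) := by
          ring
      _ = h ^ (γ * (1 - 1 / σ) + γ * (σ - 1) * (1 - 1 / σ - 1)) * (R * k) := by
          rw [← Real.rpow_add hh]
      _ = R * k := by rw [he3, Real.rpow_zero, one_mul]
  have hmatch : -(R * k) * (h ^ (γ * (σ - 1)) * (R * k) ^ (-σ))
      - (σ - 1)⁻¹ * (h ^ γ / (R * k)) ^ (σ - 1)
      = -(1 + (σ - 1)⁻¹) * (h ^ γ * (h ^ (γ * (σ - 1)) * (R * k) ^ (-σ))) ^ (1 - 1 / σ) := by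
    rw [hX2, hX3]
    have := hX1
    nlinarith [this]
  have := phi_lip (A := (σ - 1)⁻¹ * (h ^ γ / (R * k)) ^ (σ - 1))
    hM ha hq hq1 hT hRk hD hmatch (pk - ρ * ph) (pk' - ρ * ph')
  simpa [GFun] using this

set_option maxHeartbeats 1000000 in
/-- Lipschitz estimate for `F̃` in `(p, v)`, uniform over symmetric `Q` and over the closure
of an open bounded set `D` with closure contained in `(0,∞)²`. -/
theorem Ftilde_lipschitz (B β₁ β₂ ρ θ σ γ R : ℝ) (hB : 0 ≤ B) (hβ₁ : 0 < β₁)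
    (hβ₂ : 0 < β₂) (hρ₀ : 0 < ρ) (hρ₁ : ρ < 1) (hθ : 0 < θ) (hσ : 1 < σ)
    (hγ₀ : 0 ≤ γ) (hγ₁ : γ < 1) (hR : 0 < R)
    (D : Set (ℝ × ℝ)) (hDopen : IsOpen D) (hDbdd : Bornology.IsBounded D)
    (hDcl : closure D ⊆ Set.Ioi (0:ℝ) ×ˢ Set.Ioi (0:ℝ)) :
    ∃ C > (0:ℝ), ∀ Q : Matrix (Fin 2) (Fin 2) ℝ, Q.IsSymm →
      ∀ z ∈ closure D, ∀ pk ph pk' ph' v v' : ℝ,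
        |Ftilde B β₁ β₂ ρ θ σ γ R Q (pk, ph) v z -
            Ftilde B β₁ β₂ ρ θ σ γ R Q (pk', ph') v' z|
          ≤ C * (|pk - pk'| + |ph - ph'| + |v - v'|) := by

  obtain ⟨r, hr⟩ := hDbdd.closure.exists_norm_le
  set r' : ℝ := max r 1 with hr'def
  have hr'1 : (1:ℝ) ≤ r' := le_max_right _ _
  have hr'0 : (0:ℝ) < r' := by linarith
  refine ⟨θ + (B + R) * r' + ρ * r' + R * r' * ρ + 1, by positivity, ?_⟩
  intro Q _ z hz pk ph pk' ph' v v'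
  obtain ⟨hz1, hz2⟩ := hDcl hz
  simp only [Set.mem_Ioi] at hz1 hz2
  have hz1r : z.1 ≤ r' := by
    have h1 : ‖z.1‖ ≤ ‖z‖ := norm_fst_le z
    have h2 : ‖z‖ ≤ r := hr z hz
    rw [Real.norm_eq_abs] at h1
    calc z.1 ≤ |z.1| := le_abs_self _
      _ ≤ r := le_trans h1 h2
      _ ≤ r' := le_max_left _ _
  have hz2r : z.2 ≤ r' := by
    have h1 : ‖z.2‖ ≤ ‖z‖ := norm_snd_le z
    have h2 : ‖z‖ ≤ r := hr z hz
    rw [Real.norm_eq_abs] at h1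
    calc z.2 ≤ |z.2| := le_abs_self _
      _ ≤ r := le_trans h1 h2
      _ ≤ r' := le_max_left _ _
  set C : ℝ := θ + (B + R) * r' + ρ * r' + R * r' * ρ + 1 with hCdef
  have key : Ftilde B β₁ β₂ ρ θ σ γ R Q (pk, ph) v z
      - Ftilde B β₁ β₂ ρ θ σ γ R Q (pk', ph') v' z
      = -(θ * (v - v')) + B * z.1 * (pk - pk') - ρ * z.2 * (ph - ph')
        + (GFun ρ σ γ R z.1 z.2 pk ph - GFun ρ σ γ R z.1 z.2 pk' ph') := by
    simp only [Ftilde, Hmax]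
    ring
  have hG := GFun_lip (ρ := ρ) (γ := γ) hσ hR hz1 hz2 pk ph pk' ph'
  have hGle : |GFun ρ σ γ R z.1 z.2 pk ph - GFun ρ σ γ R z.1 z.2 pk' ph'|
      ≤ R * z.1 * (|pk - pk'| + ρ * |ph - ph'|) := by
    refine le_trans hG ?_
    have h1 : |(pk - ρ * ph) - (pk' - ρ * ph')| ≤ |pk - pk'| + ρ * |ph - ph'| := by
      have : (pk - ρ * ph) - (pk' - ρ * ph') = (pk - pk') - ρ * (ph - ph') := by ring
      rw [this]
      calc |(pk - pk') - ρ * (ph - ph')| ≤ |pk - pk'| + |ρ * (ph - ph')| := abs_sub _ _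
        _ = |pk - pk'| + ρ * |ph - ph'| := by rw [abs_mul, abs_of_pos hρ₀]
    exact mul_le_mul_of_nonneg_left h1 (by positivity)
  rw [key]
  have habs : |-(θ * (v - v')) + B * z.1 * (pk - pk') - ρ * z.2 * (ph - ph')
        + (GFun ρ σ γ R z.1 z.2 pk ph - GFun ρ σ γ R z.1 z.2 pk' ph')|
      ≤ θ * |v - v'| + B * z.1 * |pk - pk'| + ρ * z.2 * |ph - ph'|
        + |GFun ρ σ γ R z.1 z.2 pk ph - GFun ρ σ γ R z.1 z.2 pk' ph'| := by
    calc |-(θ * (v - v')) + B * z.1 * (pk - pk') - ρ * z.2 * (ph - ph')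
          + (GFun ρ σ γ R z.1 z.2 pk ph - GFun ρ σ γ R z.1 z.2 pk' ph')|
        ≤ |-(θ * (v - v')) + B * z.1 * (pk - pk') - ρ * z.2 * (ph - ph')|
          + |GFun ρ σ γ R z.1 z.2 pk ph - GFun ρ σ γ R z.1 z.2 pk' ph'| := abs_add_le _ _
      _ ≤ |-(θ * (v - v')) + B * z.1 * (pk - pk')| + |ρ * z.2 * (ph - ph')|
          + |GFun ρ σ γ R z.1 z.2 pk ph - GFun ρ σ γ R z.1 z.2 pk' ph'| := by
            linarith [abs_sub (-(θ * (v - v')) + B * z.1 * (pk - pk'))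
              (ρ * z.2 * (ph - ph'))]
      _ ≤ |-(θ * (v - v'))| + |B * z.1 * (pk - pk')| + |ρ * z.2 * (ph - ph')|
          + |GFun ρ σ γ R z.1 z.2 pk ph - GFun ρ σ γ R z.1 z.2 pk' ph'| := by
            linarith [abs_add_le (-(θ * (v - v'))) (B * z.1 * (pk - pk'))]
      _ = θ * |v - v'| + B * z.1 * |pk - pk'| + ρ * z.2 * |ph - ph'|
          + |GFun ρ σ γ R z.1 z.2 pk ph - GFun ρ σ γ R z.1 z.2 pk' ph'| := by
            rw [abs_neg, abs_mul (θ) (v - v'), abs_of_pos hθ,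
              abs_mul (B * z.1) (pk - pk'),
              abs_of_nonneg (by positivity : (0:ℝ) ≤ B * z.1),
              abs_mul (ρ * z.2) (ph - ph'),
              abs_of_nonneg (by positivity : (0:ℝ) ≤ ρ * z.2)]
  refine le_trans habs ?_
  have c1 : B * z.1 + R * z.1 ≤ C := by
    have h1 : B * z.1 ≤ B * r' := mul_le_mul_of_nonneg_left hz1r hB
    have h2 : R * z.1 ≤ R * r' := mul_le_mul_of_nonneg_left hz1r hR.le
    have h3 : (0:ℝ) ≤ ρ * r' := by positivity
    have h4 : (0:ℝ) ≤ R * r' * ρ := by positivity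
    rw [hCdef]; nlinarith
  have c2 : ρ * z.2 + R * z.1 * ρ ≤ C := by
    have h1 : ρ * z.2 ≤ ρ * r' := mul_le_mul_of_nonneg_left hz2r hρ₀.le
    have h2 : R * z.1 * ρ ≤ R * r' * ρ :=
      mul_le_mul_of_nonneg_right (mul_le_mul_of_nonneg_left hz1r hR.le) hρ₀.le
    have h3 : (0:ℝ) ≤ (B + R) * r' := by positivity
    rw [hCdef]; nlinarith
  have c3 : θ ≤ C := by
    have h3 : (0:ℝ) ≤ (B + R) * r' := by positivity
    have h4 : (0:ℝ) ≤ ρ * r' := by positivity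
    have h5 : (0:ℝ) ≤ R * r' * ρ := by positivity
    rw [hCdef]; nlinarith
  have t1 : (B * z.1 + R * z.1) * |pk - pk'| ≤ C * |pk - pk'| :=
    mul_le_mul_of_nonneg_right c1 (abs_nonneg _)
  have t2 : (ρ * z.2 + R * z.1 * ρ) * |ph - ph'| ≤ C * |ph - ph'| :=
    mul_le_mul_of_nonneg_right c2 (abs_nonneg _)
  have t3 : θ * |v - v'| ≤ C * |v - v'| :=
    mul_le_mul_of_nonneg_right c3 (abs_nonneg _)
  nlinarith [hGle, t1, t2, t3]


end HabitModel
end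
end

section
/- Let D ⊂ ℝ² be open and bounded with closure contained in (0,∞)². Then there exists a constant C̄ > 0 such that for every α ∈ (0,1), every real symmetric 2×2 matrix Q = (Q_{ij}), every p = (p_k,p_h) ∈ ℝ² and every v ∈ ℝ: ⟨F̃(Q, p, v, ·)⟩^α_D ≤ C̄·(1 + Σ_{i,j=1}^{2}|Q_{ij}| + |p_k| + |p_h| + |v|), where for a function f : D → ℝ one sets ⟨f⟩^α_D := sup over (k,h) ∈ D and δ > 0 of δ^{−α}·( sup_{D ∩ B_δ(k,h)} f − inf_{D ∩ B_δ(k,h)} f ), with B_δ(k,h) the open Euclidean ball of radius δ centered at (k,h). -/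
open MeasureTheory ProbabilityTheory Real Set Matrix
open scoped ENNReal NNReal

noncomputable section

namespace HabitModel

def lipC (a b e : ℝ) : ℝ := |e| * max (a ^ (e-1)) (b ^ (e-1))
def bdC (a b e : ℝ) : ℝ := max (a ^ e) (b ^ e)

def LipOn (L : ℝ) (f : ℝ × ℝ → ℝ) (K : Set (ℝ × ℝ)) : Prop :=
  ∀ x ∈ K, ∀ y ∈ K, |f x - f y| ≤ L * dist x y

lemma LipOn.mono {L L' : ℝ} {f : ℝ × ℝ → ℝ} {K : Set (ℝ × ℝ)}
    (h : LipOn L f K) (hL : L ≤ L') : LipOn L' f K := fun x hx y hy =>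
  (h x hx y hy).trans (mul_le_mul_of_nonneg_right hL dist_nonneg)

lemma LipOn.add {L M : ℝ} {f g : ℝ × ℝ → ℝ} {K : Set (ℝ × ℝ)}
    (hf : LipOn L f K) (hg : LipOn M g K) :
    LipOn (L + M) (fun w => f w + g w) K := by
  intro x hx y hy
  have := abs_add_le (f x - f y) (g x - g y)
  have h1 := hf x hx y hy
  have h2 := hg x hx y hy
  have : |f x + g x - (f y + g y)| ≤ |f x - f y| + |g x - g y| := by
    have := abs_add_le (f x - f y) (g x - g y)
    rw [show f x + g x - (f y + g y) = (f x - f y) + (g x - g y) by ring]; exact this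
  nlinarith [this, h1, h2]

lemma rpow_le_max {a b e : ℝ} (ha : 0 < a) (x : ℝ) (hx : x ∈ Icc a b) :
    x ^ e ≤ max (a ^ e) (b ^ e) := by
  rcases le_or_gt 0 e with he | he
  · exact le_max_of_le_right (Real.rpow_le_rpow (ha.le.trans hx.1) hx.2 he)
  · exact le_max_of_le_left (Real.rpow_le_rpow_of_nonpos ha hx.1 he.le)

lemma lip_rpow {a b : ℝ} (ha : 0 < a) (e : ℝ) :
    ∀ x ∈ Icc a b, ∀ y ∈ Icc a b,
      |x ^ e - y ^ e| ≤ lipC a b e * |x - y| := by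
  rw [lipC]
  intro x hx y hy
  have key := Convex.norm_image_sub_le_of_norm_hasDerivWithin_le
    (f := fun t : ℝ => t ^ e) (f' := fun t : ℝ => e * t ^ (e - 1))
    (s := Icc a b) (C := |e| * max (a ^ (e-1)) (b ^ (e-1)))
    (fun t ht => (Real.hasDerivAt_rpow_const
      (Or.inl (ne_of_gt (ha.trans_le ht.1)))).hasDerivWithinAt)
    (fun t ht => by
      rw [Real.norm_eq_abs, abs_mul]
      have h0 : (0:ℝ) ≤ t ^ (e-1) := Real.rpow_nonneg (ha.le.trans ht.1) _
      rw [abs_of_nonneg h0]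
      exact mul_le_mul_of_nonneg_left (rpow_le_max ha t ht) (abs_nonneg e))
    (convex_Icc a b) hy hx
  simpa [Real.norm_eq_abs, abs_sub_comm] using key

lemma lip_mul_proj {a b : ℝ} {u v : ℝ → ℝ} {Lu Lv Mu Mv : ℝ}
    (hLu : 0 ≤ Lu) (hLv : 0 ≤ Lv)
    (hu : ∀ x ∈ Icc a b, ∀ y ∈ Icc a b, |u x - u y| ≤ Lu * |x - y|)
    (hv : ∀ x ∈ Icc a b, ∀ y ∈ Icc a b, |v x - v y| ≤ Lv * |x - y|)
    (hMu : ∀ x ∈ Icc a b, |u x| ≤ Mu) (hMv : ∀ x ∈ Icc a b, |v x| ≤ Mv) :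
    LipOn (Mu * Lv + Mv * Lu) (fun w => u w.1 * v w.2) (Icc a b ×ˢ Icc a b) := by
  intro x hx y hy
  have h1 : dist x.1 y.1 ≤ dist x y := by rw [Prod.dist_eq]; exact le_max_left _ _
  have h2 : dist x.2 y.2 ≤ dist x y := by rw [Prod.dist_eq]; exact le_max_right _ _
  rw [Real.dist_eq] at h1 h2
  have key : |u x.1 * v x.2 - u y.1 * v y.2|
      ≤ |u x.1| * |v x.2 - v y.2| + |v y.2| * |u x.1 - u y.1| := by
    calc |u x.1 * v x.2 - u y.1 * v y.2|
        = |u x.1 * (v x.2 - v y.2) + v y.2 * (u x.1 - u y.1)| := by ring_nf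
      _ ≤ |u x.1 * (v x.2 - v y.2)| + |v y.2 * (u x.1 - u y.1)| := abs_add_le _ _
      _ = |u x.1| * |v x.2 - v y.2| + |v y.2| * |u x.1 - u y.1| := by
          rw [abs_mul, abs_mul]
    
  have hM1 := hMu x.1 hx.1
  have hM2 := hMv y.2 hy.2
  have hl1 := hu x.1 hx.1 y.1 hy.1
  have hl2 := hv x.2 hx.2 y.2 hy.2
  have d0 : (0:ℝ) ≤ dist x y := dist_nonneg
  have e1 : |u x.1| * |v x.2 - v y.2| ≤ Mu * (Lv * dist x y) := by
    have : |v x.2 - v y.2| ≤ Lv * dist x y :=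
      hl2.trans (by nlinarith [abs_nonneg (x.2 - y.2)])
    exact mul_le_mul hM1 this (abs_nonneg _) ((abs_nonneg _).trans hM1)
  have e2 : |v y.2| * |u x.1 - u y.1| ≤ Mv * (Lu * dist x y) := by
    have : |u x.1 - u y.1| ≤ Lu * dist x y :=
      hl1.trans (by nlinarith [abs_nonneg (x.1 - y.1)])
    exact mul_le_mul hM2 this (abs_nonneg _) ((abs_nonneg _).trans hM2)
  calc |u x.1 * v x.2 - u y.1 * v y.2| ≤ _ := key
    _ ≤ Mu * (Lv * dist x y) + Mv * (Lu * dist x y) := add_le_add e1 e2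
    _ = (Mu * Lv + Mv * Lu) * dist x y := by ring

lemma lip_glue {K : Set (ℝ × ℝ)} (hK : Convex ℝ K) {φ f₁ f₂ : ℝ × ℝ → ℝ} {L : ℝ}
    (hφ : ContinuousOn φ K) (h₁ : LipOn L f₁ K) (h₂ : LipOn L f₂ K)
    (heq : ∀ w ∈ K, φ w = 0 → f₁ w = f₂ w) :
    LipOn L (fun w => if φ w ≤ 0 then f₁ w else f₂ w) K := by
  have main : ∀ x ∈ K, ∀ y ∈ K, φ x ≤ 0 → ¬ φ y ≤ 0 →
      |f₁ x - f₂ y| ≤ L * dist x y := by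
    intro x hx y hy hpx hpy
    -- path
    set g : ℝ → ℝ × ℝ := fun t => x + t • (y - x) with hg
    have hmem : ∀ t ∈ Icc (0:ℝ) 1, g t ∈ K := fun t ht =>
      hK.add_smul_sub_mem hx hy ht
    have hcont : ContinuousOn (φ ∘ g) (Icc 0 1) :=
      hφ.comp (Continuous.continuousOn (by continuity)) hmem
    have h01 : (0:ℝ) ∈ Icc (φ (g 0)) (φ (g 1)) := by
      constructor
      · simpa [hg] using hpx
      · simpa [hg] using (not_le.mp hpy).le
    obtain ⟨t, ht, hφt⟩ := intermediate_value_Icc (by norm_num) hcont h01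
    have hzK : (x + t • (y - x)) ∈ K := hmem t ht
    set z : ℝ × ℝ := x + t • (y - x) with hz
    have hφz : φ z = 0 := hφt
    have hfz : f₁ z = f₂ z := heq z hzK hφz
    have d1 : dist x z = t * dist x y := by
      have hxx : x - z = t • (x - y) := by rw [hz]; module
      rw [dist_eq_norm, dist_eq_norm, hxx, norm_smul, Real.norm_eq_abs,
        abs_of_nonneg ht.1]
    have d2 : dist z y = (1 - t) * dist x y := by
      have hxx : z - y = (1 - t) • (x - y) := by rw [hz]; module
      rw [dist_eq_norm, dist_eq_norm, hxx, norm_smul, Real.norm_eq_abs,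
        abs_of_nonneg (by linarith [ht.2] : (0:ℝ) ≤ 1 - t)]
    calc |f₁ x - f₂ y| = |(f₁ x - f₁ z) + (f₂ z - f₂ y)| := by rw [hfz]; ring_nf
      _ ≤ |f₁ x - f₁ z| + |f₂ z - f₂ y| := abs_add_le _ _
      _ ≤ L * dist x z + L * dist z y := add_le_add (h₁ x hx z hzK) (h₂ z hzK y hy)
      _ = L * dist x y := by rw [d1, d2]; ring
  intro x hx y hy
  by_cases hpx : φ x ≤ 0 <;> by_cases hpy : φ y ≤ 0 <;> simp only [hpx, hpy, if_pos, if_neg,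
    if_true, if_false]
  · exact h₁ x hx y hy
  · exact main x hx y hy hpx hpy
  · rw [abs_sub_comm, dist_comm]; exact main y hy x hx hpy hpx
  · exact h₂ x hx y hy

-- rpow algebra helpers
lemma branch1_eq {σ γ R k h : ℝ} (hσ : 1 < σ) (hR : 0 < R) (hk : 0 < k) (hh : 0 < h) :
    (h ^ γ / (R * k)) ^ (σ - 1) = (R ^ (1-σ) * k ^ (1-σ)) * h ^ (γ * (σ - 1)) := by
  have hRk : 0 < R * k := mul_pos hR hk
  have h1 : (h ^ γ / (R * k)) ^ (σ - 1) = (h ^ γ) ^ (σ-1) / (R*k) ^ (σ-1) :=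
    Real.div_rpow (Real.rpow_nonneg hh.le γ) hRk.le _
  have h2 : (h ^ γ) ^ (σ-1) = h ^ (γ * (σ-1)) := (Real.rpow_mul hh.le γ (σ-1)).symm
  have h3 : ((R*k) ^ (σ-1))⁻¹ = (R*k) ^ (1-σ) := by
    rw [← Real.rpow_neg hRk.le]; ring_nf
  have h4 : (R*k) ^ (1-σ) = R ^ (1-σ) * k ^ (1-σ) := Real.mul_rpow hR.le hk.le
  rw [h1, h2, div_eq_mul_inv, h3, h4]; ring

lemma branch2_eq {σ γ h q : ℝ} (hh : 0 < h) (hq : 0 < q) :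
    (h ^ γ * q) ^ (1 - 1/σ) = h ^ (γ * (1 - 1/σ)) * q ^ (1 - 1/σ) := by
  rw [Real.mul_rpow (Real.rpow_nonneg hh.le γ) hq.le,
    ← Real.rpow_mul hh.le γ (1 - 1/σ)]

lemma cond_iff {σ γ R k h q : ℝ} (hR : 0 < R) (hk : 0 < k) (hh : 0 < h) :
    (q ≤ h ^ (γ * (σ - 1)) * (R * k) ^ (-σ)) ↔
      q * (R * k) ^ σ - h ^ (γ * (σ - 1)) ≤ 0 := by
  have hRk : 0 < R * k := mul_pos hR hk
  have ht : 0 < (R*k) ^ σ := Real.rpow_pos_of_pos hRk σ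
  rw [Real.rpow_neg hRk.le, ← div_eq_mul_inv, le_div_iff₀ ht, sub_nonpos]

lemma interface_eq {σ γ R k h q : ℝ} (hσ : 1 < σ) (hγ₀ : 0 ≤ γ) (hR : 0 < R)
    (hk : 0 < k) (hh : 0 < h)
    (hphi : q * (R * k) ^ σ - h ^ (γ * (σ - 1)) = 0) :
    (-(R * q)) * k + (-((σ-1)⁻¹ * R ^ (1-σ))) * (k ^ (1-σ) * h ^ (γ * (σ-1)))
      = (-((1 + (σ-1)⁻¹) * q ^ (1 - 1/σ))) * h ^ (γ * (1 - 1/σ)) := by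
  have hσ0 : (0:ℝ) < σ := by linarith
  have hRk : 0 < R * k := mul_pos hR hk
  have ht : 0 < (R*k) ^ σ := Real.rpow_pos_of_pos hRk σ
  have hX : 0 < h ^ (γ * (σ-1)) := Real.rpow_pos_of_pos hh _
  have hq0 : q = h ^ (γ * (σ-1)) * (R*k) ^ (-σ) := by
    rw [Real.rpow_neg hRk.le, ← div_eq_mul_inv, eq_div_iff ht.ne']
    linarith
  have hqpos : 0 < q := by
    rw [hq0]; exact mul_pos hX (Real.rpow_pos_of_pos hRk _)
  -- q ^ (1-1/σ) computation
  have hqe : q ^ (1 - 1/σ) = h ^ (γ * (σ-1) * (1 - 1/σ)) * (R*k) ^ (-σ * (1 - 1/σ)) := by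
    rw [hq0, Real.mul_rpow hX.le (Real.rpow_nonneg hRk.le _),
      ← Real.rpow_mul hh.le, ← Real.rpow_mul hRk.le]
  have hexp1 : γ * (σ-1) * (1 - 1/σ) + γ * (1 - 1/σ) = γ * (σ-1) := by
    field_simp; ring
  have hexp2 : -σ * (1 - 1/σ) = 1 - σ := by field_simp; ring
  have hRq : R * q * k = h ^ (γ * (σ-1)) * (R*k) ^ (1-σ) := by
    have h5 : (R*k) ^ (1-σ) = (R*k) * (R*k) ^ (-σ) := by
      rw [show (1:ℝ)-σ = 1 + -σ by ring, Real.rpow_add hRk, Real.rpow_one]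
    rw [hq0, h5]; ring
  have hmul : (R*k) ^ (1-σ) = R ^ (1-σ) * k ^ (1-σ) := Real.mul_rpow hR.le hk.le
  have hRHS : (-((1 + (σ-1)⁻¹) * q ^ (1 - 1/σ))) * h ^ (γ * (1 - 1/σ))
      = -((1 + (σ-1)⁻¹)) * (h ^ (γ * (σ-1)) * (R*k) ^ (1-σ)) := by
    rw [hqe, hexp2]
    have : h ^ (γ * (σ-1) * (1 - 1/σ)) * h ^ (γ * (1 - 1/σ)) = h ^ (γ * (σ-1)) := by
      rw [← Real.rpow_add hh, hexp1]
    rw [← this]; ring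
  rw [hRHS]
  have hLHS : (-(R * q)) * k = -(h ^ (γ * (σ-1)) * (R*k) ^ (1-σ)) := by
    rw [← hRq]; ring
  rw [hLHS, hmul]; ring


lemma lipC_nonneg {a b : ℝ} (ha : 0 < a) (e : ℝ) : 0 ≤ lipC a b e :=
  mul_nonneg (abs_nonneg _) (le_max_of_le_left (Real.rpow_nonneg ha.le _))

lemma bdC_nonneg {a b : ℝ} (ha : 0 < a) (e : ℝ) : 0 ≤ bdC a b e :=
  le_max_of_le_left (Real.rpow_nonneg ha.le _)

lemma LipOn.const_mul {L c : ℝ} {f : ℝ × ℝ → ℝ} {K : Set (ℝ × ℝ)}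
    (h : LipOn L f K) : LipOn (|c| * L) (fun w => c * f w) K := by
  intro x hx y hy
  have : |c * f x - c * f y| = |c| * |f x - f y| := by rw [← abs_mul]; ring_nf
  rw [this, mul_assoc]
  exact mul_le_mul_of_nonneg_left (h x hx y hy) (abs_nonneg c)

lemma LipOn.congr {L : ℝ} {f g : ℝ × ℝ → ℝ} {K : Set (ℝ × ℝ)}
    (h : LipOn L f K) (he : ∀ w ∈ K, f w = g w) : LipOn L g K := by
  intro x hx y hy
  rw [← he x hx, ← he y hy]; exact h x hx y hy

lemma lip_fst {a b Lg : ℝ} {g : ℝ → ℝ} (hLg : 0 ≤ Lg)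
    (hg : ∀ x ∈ Icc a b, ∀ y ∈ Icc a b, |g x - g y| ≤ Lg * |x - y|) :
    LipOn Lg (fun w => g w.1) (Icc a b ×ˢ Icc a b) := by
  intro x hx y hy
  refine (hg x.1 hx.1 y.1 hy.1).trans (mul_le_mul_of_nonneg_left ?_ hLg)
  rw [← Real.dist_eq, Prod.dist_eq]; exact le_max_left _ _

lemma lip_snd {a b Lg : ℝ} {g : ℝ → ℝ} (hLg : 0 ≤ Lg)
    (hg : ∀ x ∈ Icc a b, ∀ y ∈ Icc a b, |g x - g y| ≤ Lg * |x - y|) :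
    LipOn Lg (fun w => g w.2) (Icc a b ×ˢ Icc a b) := by
  intro x hx y hy
  refine (hg x.2 hx.2 y.2 hy.2).trans (mul_le_mul_of_nonneg_left ?_ hLg)
  rw [← Real.dist_eq, Prod.dist_eq]; exact le_max_right _ _

lemma lip1_linear (c : ℝ) : ∀ x y : ℝ, |c * x - c * y| ≤ |c| * |x - y| := by
  intro x y; rw [← abs_mul]; apply le_of_eq; ring_nf

lemma phi_contOn {q σ R e1 a b : ℝ} (ha : 0 < a) (hR : 0 < R) :
    ContinuousOn (fun w : ℝ × ℝ => q * (R * w.1) ^ σ - w.2 ^ e1)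
      (Icc a b ×ˢ Icc a b) := by
  intro w hw
  have hk : 0 < w.1 := ha.trans_le hw.1.1
  have hh : 0 < w.2 := ha.trans_le hw.2.1
  apply ContinuousAt.continuousWithinAt
  have c1 : ContinuousAt (fun w : ℝ × ℝ => (R * w.1) ^ σ) w :=
    ContinuousAt.rpow_const ((continuous_const.mul continuous_fst).continuousAt)
      (Or.inl (mul_pos hR hk).ne')
  have c2 : ContinuousAt (fun w : ℝ × ℝ => w.2 ^ e1) w :=
    ContinuousAt.rpow_const continuous_snd.continuousAt (Or.inl hh.ne')
  exact (continuousAt_const.mul c1).sub c2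


lemma abs_rpow_bound {a b : ℝ} (ha : 0 < a) (e : ℝ) :
    ∀ x ∈ Icc a b, |x ^ e| ≤ bdC a b e := by
  intro x hx
  rw [abs_of_nonneg (Real.rpow_nonneg (ha.trans_le hx.1).le e)]
  exact rpow_le_max ha x hx

lemma GFun_lip_s5 (ρ σ γ R pk ph a b : ℝ) (hσ : 1 < σ) (hγ₀ : 0 ≤ γ) (hR : 0 < R)
    (ha : 0 < a) (hab : a ≤ b) :
    LipOn (R * |pk - ρ * ph|
        + |(σ-1)⁻¹ * R ^ (1-σ)| *
          (bdC a b (1-σ) * lipC a b (γ*(σ-1)) + bdC a b (γ*(σ-1)) * lipC a b (1-σ))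
        + |(1 + (σ-1)⁻¹) * (pk - ρ*ph) ^ (1 - 1/σ)| * lipC a b (γ*(1-1/σ)))
      (fun w => GFun ρ σ γ R w.1 w.2 pk ph) (Icc a b ×ˢ Icc a b) := by
  have hq : ∀ w : ℝ × ℝ, True := fun _ => trivial
  -- abbreviations
  set q := pk - ρ * ph with hqdef
  set e1 := γ * (σ - 1) with he1
  set eσ := 1 - σ with heσ
  set e3 := γ * (1 - 1/σ) with he3
  set L := R * |q| + |(σ-1)⁻¹ * R ^ (1-σ)| *
      (bdC a b eσ * lipC a b e1 + bdC a b e1 * lipC a b eσ)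
      + |(1 + (σ-1)⁻¹) * q ^ (1 - 1/σ)| * lipC a b e3 with hLdef
  have hT2 : 0 ≤ |(σ-1)⁻¹ * R ^ (1-σ)| *
      (bdC a b eσ * lipC a b e1 + bdC a b e1 * lipC a b eσ) :=
    mul_nonneg (abs_nonneg _) (add_nonneg
      (mul_nonneg (bdC_nonneg ha _) (lipC_nonneg ha _))
      (mul_nonneg (bdC_nonneg ha _) (lipC_nonneg ha _)))
  have hT1 : 0 ≤ R * |q| := mul_nonneg hR.le (abs_nonneg _)
  have hT3 : 0 ≤ |(1 + (σ-1)⁻¹) * q ^ (1 - 1/σ)| * lipC a b e3 :=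
    mul_nonneg (abs_nonneg _) (lipC_nonneg ha _)
  -- Lipschitz of branch functions
  have l1a : LipOn (R * |q|) (fun w : ℝ × ℝ => (-(R*q)) * w.1) (Icc a b ×ˢ Icc a b) := by
    have h0 : |-(R*q)| = R * |q| := by rw [abs_neg, abs_mul, abs_of_pos hR]
    have := lip_fst (a := a) (b := b) (g := fun x => (-(R*q)) * x)
      (abs_nonneg (-(R*q))) (fun x _ y _ => lip1_linear (-(R*q)) x y)
    rwa [h0] at this
  have l1b : LipOn (bdC a b eσ * lipC a b e1 + bdC a b e1 * lipC a b eσ)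
      (fun w : ℝ × ℝ => (w.1 ^ eσ) * (w.2 ^ e1)) (Icc a b ×ˢ Icc a b) :=
    lip_mul_proj (lipC_nonneg ha eσ) (lipC_nonneg ha e1)
      (lip_rpow ha eσ) (lip_rpow ha e1)
      (abs_rpow_bound ha eσ) (abs_rpow_bound ha e1)
  have l1 : LipOn L
      (fun w : ℝ × ℝ => (-(R*q)) * w.1
        + (-((σ-1)⁻¹ * R ^ (1-σ))) * ((w.1 ^ eσ) * (w.2 ^ e1)))
      (Icc a b ×ˢ Icc a b) := by
    have habs : |(-((σ-1)⁻¹ * R ^ (1-σ)))| = |(σ-1)⁻¹ * R ^ (1-σ)| := abs_neg _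
    have := l1a.add (l1b.const_mul (c := -((σ-1)⁻¹ * R ^ (1-σ))))
    rw [habs] at this
    exact this.mono (by rw [hLdef]; linarith)
  have l2 : LipOn L
      (fun w : ℝ × ℝ => (-((1 + (σ-1)⁻¹) * q ^ (1 - 1/σ))) * (w.2 ^ e3))
      (Icc a b ×ˢ Icc a b) := by
    have base := lip_snd (a := a) (b := b) (g := fun x => x ^ e3)
      (lipC_nonneg ha e3) (lip_rpow ha e3)
    have := base.const_mul (c := -((1 + (σ-1)⁻¹) * q ^ (1 - 1/σ)))
    rw [abs_neg] at this
    exact this.mono (by rw [hLdef]; linarith)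
  -- interface equality
  have heqi : ∀ w ∈ Icc a b ×ˢ Icc a b,
      (fun w : ℝ × ℝ => q * (R * w.1) ^ σ - w.2 ^ e1) w = 0 →
      (fun w : ℝ × ℝ => (-(R*q)) * w.1
        + (-((σ-1)⁻¹ * R ^ (1-σ))) * ((w.1 ^ eσ) * (w.2 ^ e1))) w
      = (fun w : ℝ × ℝ => (-((1 + (σ-1)⁻¹) * q ^ (1 - 1/σ))) * (w.2 ^ e3)) w := by
    intro w hw h0
    have hk : 0 < w.1 := ha.trans_le hw.1.1
    have hh : 0 < w.2 := ha.trans_le hw.2.1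
    have := interface_eq (σ := σ) (γ := γ) (R := R) (k := w.1) (h := w.2) (q := q)
      hσ hγ₀ hR hk hh (by simpa [he1] using h0)
    rw [← he1, ← heσ, ← he3] at this
    linarith [this]
  have hglue := lip_glue ((convex_Icc a b).prod (convex_Icc a b))
    (phi_contOn (q := q) (σ := σ) (R := R) (e1 := e1) ha hR) l1 l2 heqi
  -- identify with GFun
  apply hglue.congr
  intro w hw
  have hk : 0 < w.1 := ha.trans_le hw.1.1
  have hh : 0 < w.2 := ha.trans_le hw.2.1
  show (if q * (R * w.1) ^ σ - w.2 ^ e1 ≤ 0 then _ else _) = GFun ρ σ γ R w.1 w.2 pk ph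
  rw [GFun]
  by_cases hc : pk - ρ * ph ≤ w.2 ^ (γ * (σ - 1)) * (R * w.1) ^ (-σ)
  · rw [if_pos ((cond_iff hR hk hh).mp hc), if_pos hc, branch1_eq hσ hR hk hh]
    ring
  · rw [if_neg (fun h => hc ((cond_iff hR hk hh).mpr h)), if_neg hc]
    have hth : 0 < w.2 ^ (γ * (σ - 1)) * (R * w.1) ^ (-σ) :=
      mul_pos (Real.rpow_pos_of_pos hh _) (Real.rpow_pos_of_pos (mul_pos hR hk) _)
    have hqpos : 0 < q := hth.trans (not_le.mp hc)
    rw [branch2_eq hh hqpos]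
    ring

lemma lip_const {c : ℝ} {K : Set (ℝ × ℝ)} : LipOn 0 (fun _ => c) K := by
  intro x hx y hy; simp [dist_nonneg]

lemma lip1_sq {a b : ℝ} (ha : 0 < a) (hab : a ≤ b) (c : ℝ) :
    ∀ x ∈ Icc a b, ∀ y ∈ Icc a b, |c * x ^ 2 - c * y ^ 2| ≤ (|c| * (2 * b)) * |x - y| := by
  intro x hx y hy
  have h1 : c * x ^ 2 - c * y ^ 2 = (c * (x + y)) * (x - y) := by ring
  rw [h1, abs_mul, abs_mul]
  have h2 : |x + y| ≤ 2 * b := by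
    rw [abs_of_pos (by nlinarith [hx.1, hy.1] : (0:ℝ) < x + y)]
    nlinarith [hx.2, hy.2]
  have := mul_le_mul_of_nonneg_left h2 (abs_nonneg c)
  nlinarith [abs_nonneg (x - y), abs_nonneg c, this]

lemma abs_rpow_le_one_add {q e : ℝ} (he0 : 0 ≤ e) (he1 : e ≤ 1) :
    |q ^ e| ≤ 1 + |q| := by
  refine (Real.abs_rpow_le_abs_rpow q e).trans ?_
  rcases le_or_gt |q| 1 with h | h
  · have := Real.rpow_le_one (abs_nonneg q) h he0
    linarith [abs_nonneg q]
  · have h2 : |q| ^ e ≤ |q| ^ (1:ℝ) := Real.rpow_le_rpow_of_exponent_le h.le he1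
    rw [Real.rpow_one] at h2; linarith

def kap1 (σ γ R a b : ℝ) : ℝ := |(σ-1)⁻¹ * R ^ (1-σ)| *
  (bdC a b (1-σ) * lipC a b (γ*(σ-1)) + bdC a b (γ*(σ-1)) * lipC a b (1-σ))

def kap3 (σ γ a b : ℝ) : ℝ := (1 + (σ-1)⁻¹) * lipC a b (γ*(1-1/σ))

def Abar (B β₁ β₂ ρ σ γ R a b : ℝ) : ℝ :=
  B + ρ + β₁^2*b + β₂^2*b + R + kap1 σ γ R a b + kap3 σ γ a b + 1

lemma kap1_nonneg {σ γ R a b : ℝ} (ha : 0 < a) : 0 ≤ kap1 σ γ R a b :=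
  mul_nonneg (abs_nonneg _) (add_nonneg
    (mul_nonneg (bdC_nonneg ha _) (lipC_nonneg ha _))
    (mul_nonneg (bdC_nonneg ha _) (lipC_nonneg ha _)))

lemma one_add_inv_pos {σ : ℝ} (hσ : 1 < σ) : (0:ℝ) < 1 + (σ-1)⁻¹ := by
  have : (0:ℝ) < (σ-1)⁻¹ := inv_pos.mpr (by linarith)
  linarith

lemma kap3_nonneg {σ γ a b : ℝ} (hσ : 1 < σ) (ha : 0 < a) : 0 ≤ kap3 σ γ a b :=
  mul_nonneg (one_add_inv_pos hσ).le (lipC_nonneg ha _)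

lemma Abar_ge_one {B β₁ β₂ ρ σ γ R a b : ℝ} (hB : 0 ≤ B) (hρ₀ : 0 < ρ)
    (hσ : 1 < σ) (hR : 0 < R) (ha : 0 < a) (hab : a ≤ b) :
    1 ≤ Abar B β₁ β₂ ρ σ γ R a b := by
  have hb : 0 < b := ha.trans_le hab
  have h1 : 0 ≤ β₁^2*b := mul_nonneg (sq_nonneg _) hb.le
  have h2 : 0 ≤ β₂^2*b := mul_nonneg (sq_nonneg _) hb.le
  have h3 := kap1_nonneg (σ := σ) (γ := γ) (R := R) (b := b) ha
  have h4 := kap3_nonneg (σ := σ) (γ := γ) (b := b) hσ ha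
  rw [Abar]; linarith

lemma Ftilde_lipbound (B β₁ β₂ ρ θ σ γ R a b : ℝ) (Q : Matrix (Fin 2) (Fin 2) ℝ)
    (p : ℝ × ℝ) (v : ℝ) (hB : 0 ≤ B) (hρ₀ : 0 < ρ) (hρ₁ : ρ < 1) (hσ : 1 < σ)
    (hγ₀ : 0 ≤ γ) (hR : 0 < R) (ha : 0 < a) (hab : a ≤ b) :
    ∃ L : ℝ, 0 ≤ L ∧
      LipOn L (fun w => Ftilde B β₁ β₂ ρ θ σ γ R Q p v w) (Icc a b ×ˢ Icc a b) ∧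
      L ≤ Abar B β₁ β₂ ρ σ γ R a b *
        (1 + (|Q 0 0| + |Q 0 1| + |Q 1 0| + |Q 1 1|) + |p.1| + |p.2| + |v|) := by
  have hb0 : 0 < b := ha.trans_le hab
  refine ⟨((((0 + |B * p.1|) + |(-(ρ * p.2))|) + |(1/2) * β₁^2 * Q 0 0| * (2*b))
      + |(1/2) * β₂^2 * Q 1 1| * (2*b))
      + (R * |p.1 - ρ * p.2| + kap1 σ γ R a b
          + |(1 + (σ-1)⁻¹) * (p.1 - ρ * p.2) ^ (1 - 1/σ)| * lipC a b (γ*(1-1/σ))),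
    ?_, ?_, ?_⟩
  · have h1 : 0 ≤ R * |p.1 - ρ * p.2| := mul_nonneg hR.le (abs_nonneg _)
    have h2 : 0 ≤ |(1 + (σ-1)⁻¹) * (p.1 - ρ * p.2) ^ (1 - 1/σ)| * lipC a b (γ*(1-1/σ)) :=
      mul_nonneg (abs_nonneg _) (lipC_nonneg ha _)
    have h3 : 0 ≤ |(1/2) * β₁^2 * Q 0 0| * (2*b) :=
      mul_nonneg (abs_nonneg _) (by linarith)
    have h4 : 0 ≤ |(1/2) * β₂^2 * Q 1 1| * (2*b) :=
      mul_nonneg (abs_nonneg _) (by linarith)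
    have h5 := kap1_nonneg (σ := σ) (γ := γ) (R := R) (b := b) ha
    have := abs_nonneg (B * p.1); have := abs_nonneg (-(ρ * p.2))
    linarith
  · have hgl : LipOn (R * |p.1 - ρ * p.2| + kap1 σ γ R a b
          + |(1 + (σ-1)⁻¹) * (p.1 - ρ * p.2) ^ (1 - 1/σ)| * lipC a b (γ*(1-1/σ)))
        (fun w => GFun ρ σ γ R w.1 w.2 p.1 p.2) (Icc a b ×ˢ Icc a b) :=
      GFun_lip_s5 ρ σ γ R p.1 p.2 a b hσ hγ₀ hR ha hab
    have t0 : LipOn 0 (fun _ : ℝ × ℝ => -θ * v) (Icc a b ×ˢ Icc a b) := lip_const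
    have t1 : LipOn (|B * p.1|) (fun w : ℝ × ℝ => (B * p.1) * w.1)
        (Icc a b ×ˢ Icc a b) :=
      lip_fst (abs_nonneg _) (fun x _ y _ => lip1_linear (B * p.1) x y)
    have t2 : LipOn (|(-(ρ * p.2))|) (fun w : ℝ × ℝ => (-(ρ * p.2)) * w.2)
        (Icc a b ×ˢ Icc a b) :=
      lip_snd (abs_nonneg _) (fun x _ y _ => lip1_linear (-(ρ * p.2)) x y)
    have t3 : LipOn (|(1/2) * β₁^2 * Q 0 0| * (2*b))
        (fun w : ℝ × ℝ => ((1/2) * β₁^2 * Q 0 0) * w.1 ^ 2) (Icc a b ×ˢ Icc a b) :=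
      lip_fst (mul_nonneg (abs_nonneg _) (by linarith)) (lip1_sq ha hab _)
    have t4 : LipOn (|(1/2) * β₂^2 * Q 1 1| * (2*b))
        (fun w : ℝ × ℝ => ((1/2) * β₂^2 * Q 1 1) * w.2 ^ 2) (Icc a b ×ˢ Icc a b) :=
      lip_snd (mul_nonneg (abs_nonneg _) (by linarith)) (lip1_sq ha hab _)
    have hsum := ((((t0.add t1).add t2).add t3).add t4).add hgl
    refine hsum.congr ?_
    intro w hw
    simp only [Ftilde, Hmax]
    ring
  · -- bound L by Abar * N
    set N : ℝ := 1 + (|Q 0 0| + |Q 0 1| + |Q 1 0| + |Q 1 1|) + |p.1| + |p.2| + |v|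
      with hN
    clear_value N
    have hq00 := abs_nonneg (Q 0 0); have hq01 := abs_nonneg (Q 0 1)
    have hq10 := abs_nonneg (Q 1 0); have hq11 := abs_nonneg (Q 1 1)
    have hp1 := abs_nonneg p.1; have hp2 := abs_nonneg p.2; have hv := abs_nonneg v
    have hN1 : 1 ≤ N := by rw [hN]; linarith
    have hN0 : 0 ≤ N := by linarith
    have hqb : |p.1 - ρ * p.2| ≤ |p.1| + |p.2| := by
      have h1 : |p.1 - ρ * p.2| ≤ |p.1| + |ρ * p.2| := abs_sub _ _
      have h2 : |ρ * p.2| = ρ * |p.2| := by rw [abs_mul, abs_of_pos hρ₀]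
      nlinarith
    have he0 : 0 ≤ 1 - 1/σ := by
      have : 1/σ < 1 := by rw [div_lt_one (by linarith)]; linarith
      linarith
    have he1 : 1 - 1/σ ≤ 1 := by
      have : 0 < 1/σ := by positivity
      linarith
    have hσ1 := one_add_inv_pos hσ
    have e1 : |B * p.1| ≤ B * N := by
      rw [abs_mul, abs_of_nonneg hB]
      have h : |p.1| ≤ N := by rw [hN]; linarith
      exact mul_le_mul_of_nonneg_left h hB
    have e2 : |(-(ρ * p.2))| ≤ ρ * N := by
      rw [abs_neg, abs_mul, abs_of_pos hρ₀]
      have h : |p.2| ≤ N := by rw [hN]; linarith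
      exact mul_le_mul_of_nonneg_left h hρ₀.le
    have e3 : |(1/2) * β₁^2 * Q 0 0| * (2*b) ≤ (β₁^2*b) * N := by
      have h1 : |(1/2) * β₁^2 * Q 0 0| = (1/2) * β₁^2 * |Q 0 0| := by
        rw [abs_mul]; congr 1; rw [abs_of_nonneg (by positivity : (0:ℝ) ≤ (1/2) * β₁^2)]
      rw [h1]
      have h2 : |Q 0 0| ≤ N := by rw [hN]; linarith
      calc (1/2) * β₁^2 * |Q 0 0| * (2*b) = (β₁^2*b) * |Q 0 0| := by ring
        _ ≤ (β₁^2*b) * N := mul_le_mul_of_nonneg_left h2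
            (mul_nonneg (sq_nonneg β₁) hb0.le)
    have e4 : |(1/2) * β₂^2 * Q 1 1| * (2*b) ≤ (β₂^2*b) * N := by
      have h1 : |(1/2) * β₂^2 * Q 1 1| = (1/2) * β₂^2 * |Q 1 1| := by
        rw [abs_mul]; congr 1; rw [abs_of_nonneg (by positivity : (0:ℝ) ≤ (1/2) * β₂^2)]
      rw [h1]
      have h2 : |Q 1 1| ≤ N := by rw [hN]; linarith
      calc (1/2) * β₂^2 * |Q 1 1| * (2*b) = (β₂^2*b) * |Q 1 1| := by ring
        _ ≤ (β₂^2*b) * N := mul_le_mul_of_nonneg_left h2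
            (mul_nonneg (sq_nonneg β₂) hb0.le)
    have e5 : R * |p.1 - ρ * p.2| ≤ R * N := by
      have h : |p.1 - ρ * p.2| ≤ N := by
        refine hqb.trans ?_
        rw [hN]; linarith
      exact mul_le_mul_of_nonneg_left h hR.le
    have e6 : kap1 σ γ R a b ≤ kap1 σ γ R a b * N := by
      nlinarith [kap1_nonneg (σ := σ) (γ := γ) (R := R) (b := b) ha]
    have e7 : |(1 + (σ-1)⁻¹) * (p.1 - ρ * p.2) ^ (1 - 1/σ)| * lipC a b (γ*(1-1/σ))
        ≤ kap3 σ γ a b * N := by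
      have hq3 : |(1 + (σ-1)⁻¹) * (p.1 - ρ * p.2) ^ (1 - 1/σ)|
          ≤ (1 + (σ-1)⁻¹) * (1 + |p.1 - ρ * p.2|) := by
        rw [abs_mul, abs_of_pos hσ1]
        exact mul_le_mul_of_nonneg_left (abs_rpow_le_one_add he0 he1) hσ1.le
      have h1 : 1 + |p.1 - ρ * p.2| ≤ N := by rw [hN]; linarith
      have h2 := mul_le_mul_of_nonneg_right hq3 (lipC_nonneg (b := b) ha (γ*(1-1/σ)))
      refine h2.trans ?_
      have h3 : (1 + (σ-1)⁻¹) * (1 + |p.1 - ρ * p.2|) * lipC a b (γ*(1-1/σ))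
          ≤ ((1 + (σ-1)⁻¹) * N) * lipC a b (γ*(1-1/σ)) :=
        mul_le_mul_of_nonneg_right (mul_le_mul_of_nonneg_left h1 hσ1.le)
          (lipC_nonneg ha _)
      refine h3.trans (le_of_eq ?_)
      rw [kap3]; ring
    rw [Abar]
    linarith [e1, e2, e3, e4, e5, e6, e7, hN0]



set_option maxHeartbeats 1000000 in
/-- Hölder-seminorm estimate for `F̃(Q,p,v,·)` on `D`: for every `α ∈ (0,1)`, every center
`(k,h) ∈ D` and every radius `δ > 0`,
`δ^{-α}·(sup_{D ∩ B_δ} F̃ - inf_{D ∩ B_δ} F̃) ≤ C̄·(1 + Σ|Q_{ij}| + |p_k| + |p_h| + |v|)`,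
where `B_δ` is the open Euclidean ball. -/
theorem Ftilde_holder (B β₁ β₂ ρ θ σ γ R : ℝ) (hB : 0 ≤ B) (hβ₁ : 0 < β₁)
    (hβ₂ : 0 < β₂) (hρ₀ : 0 < ρ) (hρ₁ : ρ < 1) (hθ : 0 < θ) (hσ : 1 < σ)
    (hγ₀ : 0 ≤ γ) (hγ₁ : γ < 1) (hR : 0 < R)
    (D : Set (ℝ × ℝ)) (hDopen : IsOpen D) (hDbdd : Bornology.IsBounded D)
    (hDcl : closure D ⊆ Set.Ioi (0:ℝ) ×ˢ Set.Ioi (0:ℝ)) :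
    ∃ C > (0:ℝ), ∀ α ∈ Set.Ioo (0:ℝ) 1, ∀ Q : Matrix (Fin 2) (Fin 2) ℝ, Q.IsSymm →
      ∀ p : ℝ × ℝ, ∀ v : ℝ, ∀ z ∈ D, ∀ δ : ℝ, 0 < δ →
        δ ^ (-α) *
          (sSup ((fun w => Ftilde B β₁ β₂ ρ θ σ γ R Q p v w) ''
              (D ∩ {w : ℝ × ℝ | (w.1 - z.1) ^ 2 + (w.2 - z.2) ^ 2 < δ ^ 2})) -
            sInf ((fun w => Ftilde B β₁ β₂ ρ θ σ γ R Q p v w) ''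
              (D ∩ {w : ℝ × ℝ | (w.1 - z.1) ^ 2 + (w.2 - z.2) ^ 2 < δ ^ 2})))
          ≤ C * (1 + (|Q 0 0| + |Q 0 1| + |Q 1 0| + |Q 1 1|) + |p.1| + |p.2| + |v|) := by
  rcases D.eq_empty_or_nonempty with rfl | hDne
  · exact ⟨1, one_pos, fun α hα Q hQ p v z hz => absurd hz (by simp)⟩
  -- geometry of D
  have hclK : IsCompact (closure D) := hDbdd.isCompact_closure
  obtain ⟨w₀, hw₀, hmin⟩ := hclK.exists_isMinOn (hDne.mono subset_closure)
    ((continuous_fst.min continuous_snd).continuousOn)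
  obtain ⟨r, hr⟩ := hDbdd.subset_closedBall 0
  set a := min w₀.1 w₀.2 with hadef
  have hw₀p := hDcl hw₀
  have ha : 0 < a := lt_min hw₀p.1 hw₀p.2
  set b := max r a with hbdef
  have hab : a ≤ b := le_max_right _ _
  have hDK : D ⊆ Icc a b ×ˢ Icc a b := by
    intro w hw
    have h1 := hmin (subset_closure hw)
    have h2 : dist w 0 ≤ r := hr hw
    rw [dist_zero_right] at h2
    have hw1 : w.1 ≤ b := le_trans (le_abs_self _)
      (le_trans (norm_fst_le w) (h2.trans (le_max_left _ _)))
    have hw2 : w.2 ≤ b := le_trans (le_abs_self _)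
      (le_trans (norm_snd_le w) (h2.trans (le_max_left _ _)))
    have hl1 : a ≤ w.1 := le_trans h1 (min_le_left _ _)
    have hl2 : a ≤ w.2 := le_trans h1 (min_le_right _ _)
    exact ⟨⟨hl1, hw1⟩, ⟨hl2, hw2⟩⟩
  have hr0 : 0 ≤ r := by
    obtain ⟨w, hw⟩ := hDne
    exact dist_nonneg.trans (hr hw)
  have hA1 : 1 ≤ Abar B β₁ β₂ ρ σ γ R a b := Abar_ge_one hB hρ₀ hσ hR ha hab
  refine ⟨Abar B β₁ β₂ ρ σ γ R a b * (2 + 2*r), by nlinarith, ?_⟩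
  intro α hα Q _hQ p v z hz δ hδ
  obtain ⟨L, hL0, hlip, hLA⟩ := Ftilde_lipbound B β₁ β₂ ρ θ σ γ R a b Q p v
    hB hρ₀ hρ₁ hσ hγ₀ hR ha hab
  set A := Abar B β₁ β₂ ρ σ γ R a b with hA
  clear_value A
  set N : ℝ := 1 + (|Q 0 0| + |Q 0 1| + |Q 1 0| + |Q 1 1|) + |p.1| + |p.2| + |v|
    with hN
  have hN1 : 1 ≤ N := by
    have := abs_nonneg (Q 0 0); have := abs_nonneg (Q 0 1); have := abs_nonneg (Q 1 0)
    have := abs_nonneg (Q 1 1); have := abs_nonneg p.1; have := abs_nonneg p.2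
    have := abs_nonneg v
    rw [hN]; linarith
  clear_value N
  have hN0 : (0:ℝ) ≤ N := by linarith
  -- oscillation bound
  set S := D ∩ {w : ℝ × ℝ | (w.1 - z.1) ^ 2 + (w.2 - z.2) ^ 2 < δ ^ 2} with hS
  set img := (fun w => Ftilde B β₁ β₂ ρ θ σ γ R Q p v w) '' S with himg
  have hSne : S.Nonempty := by
    refine ⟨z, hz, ?_⟩
    simp only [mem_setOf_eq, sub_self]
    norm_num
    positivity
  have himgne : img.Nonempty := hSne.image _
  have hosc : ∀ c : ℝ, (∀ w₁ ∈ S, ∀ w₂ ∈ S, dist w₁ w₂ ≤ c) →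
      sSup img - sInf img ≤ L * c := by
    intro c hc
    have hkey : ∀ s ∈ img, s ≤ sInf img + L * c := by
      intro s hs
      obtain ⟨w₁, hw₁, rfl⟩ := hs
      have hinf : Ftilde B β₁ β₂ ρ θ σ γ R Q p v w₁ - L * c ≤ sInf img := by
        refine le_csInf himgne ?_
        intro t ht
        obtain ⟨w₂, hw₂, rfl⟩ := ht
        have hd := hlip w₁ (hDK hw₁.1) w₂ (hDK hw₂.1)
        have hcc := hc w₁ hw₁ w₂ hw₂
        have h3 : Ftilde B β₁ β₂ ρ θ σ γ R Q p v w₁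
            - Ftilde B β₁ β₂ ρ θ σ γ R Q p v w₂ ≤ L * c :=
          le_trans (le_abs_self _) (hd.trans (mul_le_mul_of_nonneg_left hcc hL0))
        linarith
      linarith
    have := csSup_le himgne hkey
    linarith
  have hball : ∀ w ∈ S, dist w z < δ := by
    intro w hw
    have hw2 := hw.2
    simp only [mem_setOf_eq] at hw2
    have h1 : |w.1 - z.1| < δ := by
      nlinarith [sq_nonneg (w.2 - z.2), abs_nonneg (w.1 - z.1), sq_abs (w.1 - z.1)]
    have h2 : |w.2 - z.2| < δ := by
      nlinarith [sq_nonneg (w.1 - z.1), abs_nonneg (w.2 - z.2), sq_abs (w.2 - z.2)]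
    rw [Prod.dist_eq]
    exact max_lt (by rwa [Real.dist_eq]) (by rwa [Real.dist_eq])
  have ho1 : sSup img - sInf img ≤ L * (2 * δ) := by
    refine hosc _ ?_
    intro w₁ hw₁ w₂ hw₂
    have := dist_triangle w₁ z w₂
    have hb1 := hball w₁ hw₁
    have hb2 := hball w₂ hw₂
    rw [dist_comm z w₂] at this
    linarith
  have ho2 : sSup img - sInf img ≤ L * (2 * r) := by
    refine hosc _ ?_
    intro w₁ hw₁ w₂ hw₂
    have := dist_triangle w₁ (0 : ℝ × ℝ) w₂
    have hb1 : dist w₁ 0 ≤ r := hr hw₁.1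
    have hb2 : dist w₂ 0 ≤ r := hr hw₂.1
    rw [dist_comm (0 : ℝ × ℝ) w₂] at this
    linarith
  have hδα : 0 < δ ^ (-α) := Real.rpow_pos_of_pos hδ _
  have hAN : (0:ℝ) ≤ A * N := by nlinarith
  rcases le_or_gt δ 1 with hδ1 | hδ1
  · have h1 : δ ^ (-α) * (sSup img - sInf img) ≤ δ ^ (-α) * (L * (2 * δ)) :=
      mul_le_mul_of_nonneg_left ho1 hδα.le
    have h3 : δ ^ (-α) * δ = δ ^ (1 - α) := by
      rw [show (1:ℝ) - α = -α + 1 by ring, Real.rpow_add hδ, Real.rpow_one]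
    have h4 : δ ^ (1 - α) ≤ 1 := Real.rpow_le_one hδ.le hδ1 (by linarith [hα.2])
    have h5 : δ ^ (-α) * (L * (2 * δ)) ≤ 2 * L := by
      have heq : δ ^ (-α) * (L * (2 * δ)) = 2 * L * (δ ^ (-α) * δ) := by ring
      rw [heq, h3]
      nlinarith [hL0]
    have h6 : 2 * L ≤ A * (2 + 2*r) * N := by nlinarith [hLA, hr0]
    linarith
  · have h2 : δ ^ (-α) ≤ 1 :=
      Real.rpow_le_one_of_one_le_of_nonpos hδ1.le (by linarith [hα.1])
    have h4 : 0 ≤ L * (2 * r) := mul_nonneg hL0 (by linarith)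
    have h5 : δ ^ (-α) * (sSup img - sInf img) ≤ L * (2 * r) := by
      nlinarith [mul_le_mul_of_nonneg_left ho2 hδα.le]
    have h6 : L * (2 * r) ≤ A * (2 + 2*r) * N := by nlinarith [hLA, hr0]
    linarith

end HabitModel
end
end
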